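/- Let $\lambda_k, \lambda_{k+1} > 0$ with $\lambda_{k+1} \ge \lambda_k$, let $\sigma_k \in (0, \lambda_k]$, and $z \ge 0$. Set $z' = (1 - \sigma_k/\lambda_k) z$. Then $\frac{(z)^2}{2\lambda_k} - \frac{(z')^2}{2\lambda_{k+1}} \le \frac{\lambda_{k+1} - \lambda_k}{2} \cdot \frac{z^2}{\lambda_k^2} + \sigma_k \cdot \frac{z^2}{\lambda_k^2}$. -/

import Mathlib

/-- Case III estimate for the change in the penalty term. -/
theorem stmt13 (lamk lamk1 sigk z : ℝ)
    (hlamk : 0 < lamk) (hlamk1 : 0 < lamk1) (hmono : lamk ≤ lamk1)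
    (hsig : 0 < sigk) (hsig' : sigk ≤ lamk) (hz : 0 ≤ z) :
    z ^ 2 / (2 * lamk) - ((1 - sigk / lamk) * z) ^ 2 / (2 * lamk1) ≤
      (lamk1 - lamk) / 2 * (z ^ 2 / lamk ^ 2) + sigk * (z ^ 2 / lamk ^ 2) := by
  have h : (1 - sigk / lamk) = (lamk - sigk) / lamk := by field_simp
  rw [h, div_sub_div _ _ (by positivity) (by positivity), div_le_iff₀ (by positivity)]
  field_simp
  nlinarith [mul_nonneg (sq_nonneg z) (sq_nonneg (lamk1 - lamk + sigk)), mul_nonneg (mul_nonneg (sq_nonneg (lamk - sigk - lamk1)) (sq_nonneg z)) (pow_pos hlamk 5).le]
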